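/- Let (Y₀, Y₁, D, X) be random elements with D ∈ {0,1}, observed outcome Y = DY₁ + (1-D)Y₀, and suppose (Y₀,Y₁) is independent of D conditionally on X. Assume there is ε > 0 such that ε ≤ P(D=1|X) ≤ 1-ε almost surely, and Y₀, Y₁ are integrable. Then E[Y₁ - Y₀] = E[ DY / p₁(X) - (1-D)Y / p₀(X) ], where p₁(X) = P(D=1|X) and p₀(X) = 1 - p₁(X). -/

import Mathlib

open MeasureTheory ProbabilityTheory

/-- Inverse-propensity-weighting identification of the average treatment effect under
unconfoundedness and overlap:
`E[Y₁ − Y₀] = E[DY/p₁(X) − (1−D)Y/p₀(X)]` with `p₁(X) = P(D=1|X)`. -/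
lemma int_mul_condexp {Ω : Type*} [mΩ : MeasurableSpace Ω]
    (μ : Measure Ω) [IsProbabilityMeasure μ] {m' : MeasurableSpace Ω}
    (hm' : m' ≤ mΩ) {h F : Ω → ℝ}
    (hh : StronglyMeasurable[m'] h) {c : ℝ} (hc : ∀ᵐ ω ∂μ, ‖h ω‖ ≤ c)
    (hF : Integrable F μ) :
    ∫ ω, h ω * F ω ∂μ = ∫ ω, h ω * (μ[F|m']) ω ∂μ := by
  have hsm : AEStronglyMeasurable[mΩ] h μ := (hh.mono hm').aestronglyMeasurable
  have hint : Integrable (h * F) μ := hF.bdd_mul hsm hc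
  have h1 : μ[h * F|m'] =ᵐ[μ] h * μ[F|m'] :=
    condExp_stronglyMeasurable_mul_of_bound hm' hh hF c hc
  calc ∫ ω, h ω * F ω ∂μ = ∫ ω, (h * F) ω ∂μ := rfl
    _ = ∫ ω, (μ[h * F|m']) ω ∂μ := (integral_condExp hm' (f := h * F)).symm
    _ = ∫ ω, (h * μ[F|m']) ω ∂μ := integral_congr_ae h1
    _ = ∫ ω, h ω * (μ[F|m']) ω ∂μ := rfl

lemma key_ipw {Ω : Type*} [mΩ : MeasurableSpace Ω] [StandardBorelSpace Ω]
    (μ : Measure Ω) [IsProbabilityMeasure μ] {W D : Ω → ℝ}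
    (hW : Measurable W) (hD : Measurable D) (hWint : Integrable W μ)
    {t : Set ℝ} (ht : MeasurableSet t) {m' : MeasurableSpace Ω}
    (hm' : m' ≤ mΩ) (hWD : CondIndepFun m' hm' W D μ)
    {g : Ω → ℝ} (hg : StronglyMeasurable[m'] g)
    {c : ℝ} (hgc : ∀ᵐ ω ∂μ, ‖g ω‖ ≤ c) :
    ∫ ω, W ω * ((D ⁻¹' t).indicator (fun _ => (1:ℝ)) ω * g ω) ∂μ
      = ∫ ω, W ω * ((μ⟦D ⁻¹' t|m'⟧) ω * g ω) ∂μ := by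
  letI : MeasurableSpace Ω := mΩ
  have : (MeasureTheory.ae μ).NeBot := ae_neBot.2 (IsProbabilityMeasure.ne_zero μ)
  obtain ⟨ω₀, hω₀⟩ := hgc.exists
  have hc0 : 0 ≤ c := (norm_nonneg _).trans hω₀
  set B : Set Ω := D ⁻¹' t with hBdef
  have hB : MeasurableSet B := hD ht
  have hgm : Measurable g := (hg.mono hm').measurable
  have hcond : ∀ s : Set ℝ, MeasurableSet s →
      (μ⟦W ⁻¹' s ∩ B|m'⟧) =ᵐ[μ] fun ω => (μ⟦W ⁻¹' s|m'⟧) ω * (μ⟦B|m'⟧) ω :=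
    fun s hs => ((condIndepFun_iff_condExp_inter_preimage_eq_mul hW hD).mp hWD) s t hs ht
  have hBbd : ∀ᵐ ω ∂μ, |(μ⟦B|m'⟧) ω| ≤ ((1:NNReal) : ℝ) := by
    refine ae_bdd_condExp_of_ae_bdd (ae_of_all _ fun ω => ?_)
    by_cases hω : ω ∈ B <;> simp [Set.indicator_apply, hω]
  -- bounds for the two weight functions
  have hw1bd : ∀ᵐ ω ∂μ, ‖B.indicator (fun _ => (1:ℝ)) ω * g ω‖ ≤ c := by
    filter_upwards [hgc] with ω hω
    rw [norm_mul]
    have h1 : ‖B.indicator (fun _ => (1:ℝ)) ω‖ ≤ 1 := by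
      by_cases hωB : ω ∈ B <;> simp [Set.indicator_apply, hωB]
    calc ‖B.indicator (fun _ => (1:ℝ)) ω‖ * ‖g ω‖ ≤ 1 * c :=
          mul_le_mul h1 hω (norm_nonneg _) zero_le_one
      _ = c := one_mul c
  have hw2bd : ∀ᵐ ω ∂μ, ‖(μ⟦B|m'⟧) ω * g ω‖ ≤ c := by
    filter_upwards [hgc, hBbd] with ω hω hωB
    rw [norm_mul]
    calc ‖(μ⟦B|m'⟧) ω‖ * ‖g ω‖ ≤ 1 * c := by
          refine mul_le_mul ?_ hω (norm_nonneg _) zero_le_one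
          simpa [Real.norm_eq_abs] using hωB
      _ = c := one_mul c
  have hw1sm : AEStronglyMeasurable (fun ω => B.indicator (fun _ => (1:ℝ)) ω * g ω) μ :=
    ((measurable_const.indicator hB).mul hgm).aestronglyMeasurable
  have hw2sm : AEStronglyMeasurable (fun ω => (μ⟦B|m'⟧) ω * g ω) μ :=
    (((stronglyMeasurable_condExp.mono hm').measurable).mul hgm).aestronglyMeasurable
  -- integrability of products
  have hw1int : ∀ {f : Ω → ℝ}, Integrable f μ →
      Integrable (fun ω => f ω * (B.indicator (fun _ => (1:ℝ)) ω * g ω)) μ := by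
    intro f hf
    exact (hf.bdd_mul hw1sm hw1bd).congr (ae_of_all _ fun ω => mul_comm _ _)
  have hw2int : ∀ {f : Ω → ℝ}, Integrable f μ →
      Integrable (fun ω => f ω * ((μ⟦B|m'⟧) ω * g ω)) μ := by
    intro f hf
    exact (hf.bdd_mul hw2sm hw2bd).congr (ae_of_all _ fun ω => mul_comm _ _)
  -- the induction
  set mW : MeasurableSpace Ω := MeasurableSpace.comap W inferInstance with hmWdef
  have hmW : mW ≤ mΩ := hW.comap_le
  letI : MeasurableSpace Ω := mΩ
  set P : (Ω → ℝ) → Prop := fun f =>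
    ∫ ω, f ω * (B.indicator (fun _ => (1:ℝ)) ω * g ω) ∂μ
      = ∫ ω, f ω * ((μ⟦B|m'⟧) ω * g ω) ∂μ with hPdef
  -- core claim on indicators of `mW`-measurable sets
  have hcore : ∀ u : Set ℝ, MeasurableSet u → P ((W ⁻¹' u).indicator (fun _ => (1:ℝ))) := by
    intro u hu
    have hsmeas : MeasurableSet (W ⁻¹' u) := hW hu
    have hsBint : Integrable ((W ⁻¹' u ∩ B).indicator (fun _ => (1:ℝ))) μ :=
      (integrable_const (1:ℝ)).indicator (hsmeas.inter hB)
    have hsint : Integrable ((W ⁻¹' u).indicator (fun _ => (1:ℝ))) μ :=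
      (integrable_const (1:ℝ)).indicator hsmeas
    have hgBsm : StronglyMeasurable[m'] (fun ω => g ω * (μ⟦B|m'⟧) ω) :=
      hg.mul stronglyMeasurable_condExp
    have hgBbd : ∀ᵐ ω ∂μ, ‖g ω * (μ⟦B|m'⟧) ω‖ ≤ c := by
      filter_upwards [hgc, hBbd] with ω hω hωB
      rw [norm_mul]
      calc ‖g ω‖ * ‖(μ⟦B|m'⟧) ω‖ ≤ c * 1 := by
            refine mul_le_mul hω ?_ (norm_nonneg _) hc0
            simpa [Real.norm_eq_abs] using hωB
        _ = c := mul_one c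
    calc ∫ ω, (W ⁻¹' u).indicator (fun _ => (1:ℝ)) ω * (B.indicator (fun _ => (1:ℝ)) ω * g ω) ∂μ
        = ∫ ω, g ω * (W ⁻¹' u ∩ B).indicator (fun _ => (1:ℝ)) ω ∂μ := by
          refine integral_congr_ae (ae_of_all _ fun ω => ?_)
          by_cases h1 : ω ∈ W ⁻¹' u <;> by_cases h2 : ω ∈ B <;>
            simp [Set.indicator_apply, h1, h2, Set.mem_inter_iff]
      _ = ∫ ω, g ω * (μ⟦W ⁻¹' u ∩ B|m'⟧) ω ∂μ :=
          int_mul_condexp μ hm' hg hgc hsBint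
      _ = ∫ ω, (g ω * (μ⟦B|m'⟧) ω) * (μ⟦W ⁻¹' u|m'⟧) ω ∂μ := by
          refine integral_congr_ae ?_
          filter_upwards [hcond u hu] with ω hω
          rw [hω]; ring
      _ = ∫ ω, (g ω * (μ⟦B|m'⟧) ω) * (W ⁻¹' u).indicator (fun _ => (1:ℝ)) ω ∂μ :=
          (int_mul_condexp μ hm' hgBsm hgBbd hsint).symm
      _ = ∫ ω, (W ⁻¹' u).indicator (fun _ => (1:ℝ)) ω * ((μ⟦B|m'⟧) ω * g ω) ∂μ := by
          refine integral_congr_ae (ae_of_all _ fun ω => ?_)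
          ring
  have hmain : ∀ ⦃f : Ω → ℝ⦄, Integrable[mW] f (μ.trim hmW) → P f := by
    refine @Integrable.induction Ω ℝ mW _ (μ.trim hmW) P ?_ ?_ ?_ ?_
    · -- indicators
      intro k s hs _
      obtain ⟨u, hu, rfl⟩ := hs
      have h0 := hcore u hu
      simp only [hPdef] at h0 ⊢
      have hrw : ∀ (w : Ω → ℝ) (ω : Ω),
          (W ⁻¹' u).indicator (fun _ => k) ω * w ω
            = k * ((W ⁻¹' u).indicator (fun _ => (1:ℝ)) ω * w ω) := by
        intro w ω
        by_cases h1 : ω ∈ W ⁻¹' u <;> simp [Set.indicator_apply, h1]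
      have e1 : (∫ ω, (W ⁻¹' u).indicator (fun _ => k) ω * (B.indicator (fun _ => (1:ℝ)) ω * g ω) ∂μ)
          = k * ∫ ω, (W ⁻¹' u).indicator (fun _ => (1:ℝ)) ω * (B.indicator (fun _ => (1:ℝ)) ω * g ω) ∂μ := by
        rw [← integral_const_mul]
        exact integral_congr_ae (ae_of_all _ fun ω =>
          hrw (fun a => B.indicator (fun _ => (1:ℝ)) a * g a) ω)
      have e2 : (∫ ω, (W ⁻¹' u).indicator (fun _ => k) ω * ((μ⟦B|m'⟧) ω * g ω) ∂μ)
          = k * ∫ ω, (W ⁻¹' u).indicator (fun _ => (1:ℝ)) ω * ((μ⟦B|m'⟧) ω * g ω) ∂μ := by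
        rw [← integral_const_mul]
        exact integral_congr_ae (ae_of_all _ fun ω =>
          hrw (fun a => (μ⟦B|m'⟧) a * g a) ω)
      rw [e1, e2, h0]
    · -- additivity
      intro f f' _ hf hf' hPf hPf'
      have hfμ : Integrable f μ := integrable_of_integrable_trim hmW hf
      have hf'μ : Integrable f' μ := integrable_of_integrable_trim hmW hf'
      simp only [hPdef] at hPf hPf' ⊢
      have e1 : ∫ ω, (f + f') ω * (B.indicator (fun _ => (1:ℝ)) ω * g ω) ∂μ
          = ∫ ω, f ω * (B.indicator (fun _ => (1:ℝ)) ω * g ω) ∂μ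
            + ∫ ω, f' ω * (B.indicator (fun _ => (1:ℝ)) ω * g ω) ∂μ := by
        rw [← integral_add (hw1int hfμ) (hw1int hf'μ)]
        refine integral_congr_ae (ae_of_all _ fun ω => ?_)
        simp [add_mul]
      have e2 : ∫ ω, (f + f') ω * ((μ⟦B|m'⟧) ω * g ω) ∂μ
          = ∫ ω, f ω * ((μ⟦B|m'⟧) ω * g ω) ∂μ
            + ∫ ω, f' ω * ((μ⟦B|m'⟧) ω * g ω) ∂μ := by
        rw [← integral_add (hw2int hfμ) (hw2int hf'μ)]
        refine integral_congr_ae (ae_of_all _ fun ω => ?_)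
        simp [add_mul]
      rw [e1, e2, hPf, hPf']
    · -- closedness
      have key : ∀ (w : Ω → ℝ), AEStronglyMeasurable w μ → (∀ᵐ ω ∂μ, ‖w ω‖ ≤ c) →
          Continuous fun f : (Lp ℝ 1 (μ.trim hmW)) => ∫ ω, f ω * w ω ∂μ := by
        intro w hwsm hwbd
        refine (LipschitzWith.of_dist_le_mul (K := ⟨c, hc0⟩) ?_).continuous
        intro f₁ f₂
        have hf₁ : Integrable (⇑f₁) μ := integrable_of_integrable_trim hmW (L1.integrable_coeFn f₁)
        have hf₂ : Integrable (⇑f₂) μ := integrable_of_integrable_trim hmW (L1.integrable_coeFn f₂)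
        have hi₁ : Integrable (fun ω => f₁ ω * w ω) μ :=
          (hf₁.bdd_mul hwsm hwbd).congr (ae_of_all _ fun ω => mul_comm _ _)
        have hi₂ : Integrable (fun ω => f₂ ω * w ω) μ :=
          (hf₂.bdd_mul hwsm hwbd).congr (ae_of_all _ fun ω => mul_comm _ _)
        have hsub : Integrable (fun ω => f₁ ω - f₂ ω) μ := hf₁.sub hf₂
        have h4 : ∫ ω, ‖f₁ ω - f₂ ω‖ ∂μ = dist f₁ f₂ := by
          have hnorm : AEStronglyMeasurable[mW] (fun ω => ‖f₁ ω - f₂ ω‖) (μ.trim hmW) :=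
            ((Lp.aestronglyMeasurable f₁).sub (Lp.aestronglyMeasurable f₂)).norm
          rw [L1.dist_eq_integral_dist, integral_trim_ae hmW hnorm]
          exact integral_congr_ae (ae_of_all _ fun ω => (dist_eq_norm _ _).symm)
        show dist (∫ ω, f₁ ω * w ω ∂μ) (∫ ω, f₂ ω * w ω ∂μ) ≤ c * dist f₁ f₂
        rw [Real.dist_eq, ← integral_sub hi₁ hi₂]
        calc |∫ ω, (f₁ ω * w ω - f₂ ω * w ω) ∂μ|
            ≤ ∫ ω, ‖f₁ ω * w ω - f₂ ω * w ω‖ ∂μ := by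
              rw [← Real.norm_eq_abs]
              exact norm_integral_le_integral_norm _
          _ ≤ ∫ ω, c * ‖f₁ ω - f₂ ω‖ ∂μ := by
              refine integral_mono_ae (hi₁.sub hi₂).norm (hsub.norm.const_mul c) ?_
              filter_upwards [hwbd] with ω hω
              calc ‖f₁ ω * w ω - f₂ ω * w ω‖ = ‖f₁ ω - f₂ ω‖ * ‖w ω‖ := by
                    rw [← sub_mul, norm_mul]
                _ ≤ ‖f₁ ω - f₂ ω‖ * c := mul_le_mul_of_nonneg_left hω (norm_nonneg _)
                _ = c * ‖f₁ ω - f₂ ω‖ := mul_comm _ _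
          _ = c * ∫ ω, ‖f₁ ω - f₂ ω‖ ∂μ := integral_const_mul c _
          _ = c * dist f₁ f₂ := by rw [h4]
      simp only [hPdef]
      exact isClosed_eq (key _ hw1sm hw1bd) (key _ hw2sm hw2bd)
    · -- ae congruence
      intro f f' hff' _ hPf
      have hff'μ : f =ᵐ[μ] f' := ae_eq_of_ae_eq_trim hff'
      simp only [hPdef] at hPf ⊢
      calc ∫ ω, f' ω * (B.indicator (fun _ => (1:ℝ)) ω * g ω) ∂μ
          = ∫ ω, f ω * (B.indicator (fun _ => (1:ℝ)) ω * g ω) ∂μ := by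
            refine integral_congr_ae ?_
            filter_upwards [hff'μ] with ω hω
            rw [hω]
        _ = ∫ ω, f ω * ((μ⟦B|m'⟧) ω * g ω) ∂μ := hPf
        _ = ∫ ω, f' ω * ((μ⟦B|m'⟧) ω * g ω) ∂μ := by
            refine integral_congr_ae ?_
            filter_upwards [hff'μ] with ω hω
            rw [hω]
  exact hmain (hWint.trim hmW ((measurable_iff_comap_le.mpr le_rfl).stronglyMeasurable))

theorem stmt_3 {Ω E : Type*} [mΩ : MeasurableSpace Ω] [StandardBorelSpace Ω] [Nonempty Ω]
    [MeasurableSpace E]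
    (μ : Measure Ω) [IsProbabilityMeasure μ]
    (Y0 Y1 D : Ω → ℝ) (X : Ω → E)
    (hY0 : Measurable Y0) (hY1 : Measurable Y1) (hD : Measurable D) (hX : Measurable X)
    (hD01 : ∀ ω, D ω = 0 ∨ D ω = 1)
    (hY0int : Integrable Y0 μ) (hY1int : Integrable Y1 μ)
    -- unconfoundedness: (Y₀, Y₁) ⫫ D | X
    (hunconf : CondIndepFun (MeasurableSpace.comap X inferInstance) hX.comap_le
      (fun ω => (Y0 ω, Y1 ω)) D μ)
    -- propensity score p₁(X) = P(D = 1 | X)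
    (p1X : Ω → ℝ)
    (hp1X : p1X = μ[D | MeasurableSpace.comap X inferInstance])
    -- overlap
    (ε : ℝ) (hε : 0 < ε)
    (hoverlap : ∀ᵐ ω ∂μ, ε ≤ p1X ω ∧ p1X ω ≤ 1 - ε)
    -- observed outcome Y = DY₁ + (1−D)Y₀
    (Y : Ω → ℝ) (hY : ∀ ω, Y ω = D ω * Y1 ω + (1 - D ω) * Y0 ω) :
    ∫ ω, (Y1 ω - Y0 ω) ∂μ =
      ∫ ω, D ω * Y ω / p1X ω - (1 - D ω) * Y ω / (1 - p1X ω) ∂μ := by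

  set m' : MeasurableSpace Ω := MeasurableSpace.comap X inferInstance with hm'def
  letI : MeasurableSpace Ω := mΩ
  have hm' : m' ≤ mΩ := hX.comap_le
  -- integrability of D
  have hDbd : ∀ ω, ‖D ω‖ ≤ 1 := by
    intro ω; rcases hD01 ω with h | h <;> simp [h]
  have hDint : Integrable D μ :=
    (integrable_const (1:ℝ)).mono' hD.aestronglyMeasurable (ae_of_all _ hDbd)
  -- the propensity score
  have hp1sm : StronglyMeasurable[m'] p1X := by
    rw [hp1X]; exact stronglyMeasurable_condExp
  -- the weight functions
  set g1 : Ω → ℝ := fun ω => (p1X ω)⁻¹ with hg1def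
  set g0 : Ω → ℝ := fun ω => (1 - p1X ω)⁻¹ with hg0def
  have hg1sm : StronglyMeasurable[m'] g1 := by
    have h := hp1sm.measurable
    exact (Measurable.inv h).stronglyMeasurable
  have hg0sm : StronglyMeasurable[m'] g0 := by
    have h : Measurable[m'] fun ω => 1 - p1X ω := measurable_const.sub hp1sm.measurable
    exact (Measurable.inv h).stronglyMeasurable
  have hg1bd : ∀ᵐ ω ∂μ, ‖g1 ω‖ ≤ ε⁻¹ := by
    filter_upwards [hoverlap] with ω hω
    obtain ⟨h1, h2⟩ := hω
    have hp : 0 < p1X ω := lt_of_lt_of_le hε h1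
    rw [hg1def, Real.norm_eq_abs, abs_of_pos (inv_pos.2 hp)]
    exact inv_anti₀ hε h1
  have hg0bd : ∀ᵐ ω ∂μ, ‖g0 ω‖ ≤ ε⁻¹ := by
    filter_upwards [hoverlap] with ω hω
    obtain ⟨h1, h2⟩ := hω
    have hp : 0 < 1 - p1X ω := by linarith
    rw [hg0def, Real.norm_eq_abs, abs_of_pos (inv_pos.2 hp)]
    refine inv_anti₀ hε (by linarith)
  -- conditional independence of each potential outcome from D
  have hCI1 : CondIndepFun m' hm' Y1 D μ :=
    hunconf.comp measurable_snd measurable_id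
  have hCI0 : CondIndepFun m' hm' Y0 D μ :=
    hunconf.comp measurable_fst measurable_id
  -- indicator identities
  have hind1 : Set.indicator (D ⁻¹' ({1} : Set ℝ)) (fun _ => (1:ℝ)) = D := by
    funext ω; rcases hD01 ω with h | h <;> simp [Set.indicator_apply, h]
  have hind0 : Set.indicator (D ⁻¹' ({0} : Set ℝ)) (fun _ => (1:ℝ)) = fun ω => 1 - D ω := by
    funext ω; rcases hD01 ω with h | h <;> simp [Set.indicator_apply, h]
  -- conditional expectation identities
  have hB1 : (μ⟦D ⁻¹' ({1} : Set ℝ)|m'⟧) = p1X := by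
    rw [hind1, hp1X]
  have hB0 : (μ⟦D ⁻¹' ({0} : Set ℝ)|m'⟧) =ᵐ[μ] fun ω => 1 - p1X ω := by
    rw [hind0]
    have h1 : μ[(fun ω => (1:ℝ) - D ω)|m'] =ᵐ[μ] μ[(fun _ => (1:ℝ))|m'] - μ[D|m'] :=
      condExp_sub (integrable_const 1) hDint m'
    refine h1.trans ?_
    rw [condExp_const hm', ← hp1X]
    exact ae_of_all _ fun ω => rfl
  -- apply the key lemma to each term
  have E1 := key_ipw μ hY1 hD hY1int (measurableSet_singleton (1:ℝ)) hm' hCI1 hg1sm hg1bd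
  have E0 := key_ipw μ hY0 hD hY0int (measurableSet_singleton (0:ℝ)) hm' hCI0 hg0sm hg0bd
  -- evaluate the right-hand sides
  have R1 : ∫ ω, Y1 ω * ((μ⟦D ⁻¹' ({1} : Set ℝ)|m'⟧) ω * g1 ω) ∂μ = ∫ ω, Y1 ω ∂μ := by
    rw [hB1]
    refine integral_congr_ae ?_
    filter_upwards [hoverlap] with ω hω
    obtain ⟨h1, h2⟩ := hω
    have h : p1X ω * g1 ω = 1 := mul_inv_cancel₀ (ne_of_gt (lt_of_lt_of_le hε h1))
    rw [h, mul_one]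
  have R0 : ∫ ω, Y0 ω * ((μ⟦D ⁻¹' ({0} : Set ℝ)|m'⟧) ω * g0 ω) ∂μ = ∫ ω, Y0 ω ∂μ := by
    refine integral_congr_ae ?_
    filter_upwards [hB0, hoverlap] with ω hω hω'
    obtain ⟨h1, h2⟩ := hω'
    rw [hω]
    have hpos : (0:ℝ) < 1 - p1X ω := by linarith
    have h : (1 - p1X ω) * g0 ω = 1 := mul_inv_cancel₀ (ne_of_gt hpos)
    rw [h, mul_one]
  -- pointwise identification of the observed-data integrand
  have hpt : ∀ ω, D ω * Y ω / p1X ω - (1 - D ω) * Y ω / (1 - p1X ω)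
      = Y1 ω * ((D ⁻¹' ({1} : Set ℝ)).indicator (fun _ => (1:ℝ)) ω * g1 ω)
        - Y0 ω * ((D ⁻¹' ({0} : Set ℝ)).indicator (fun _ => (1:ℝ)) ω * g0 ω) := by
    intro ω
    rcases hD01 ω with h | h <;>
      simp [hY ω, h, Set.indicator_apply, div_eq_mul_inv, hg1def, hg0def] <;> ring
  -- integrability of the two pieces
  have hw1bd : ∀ᵐ ω ∂μ, ‖(D ⁻¹' ({1} : Set ℝ)).indicator (fun _ => (1:ℝ)) ω * g1 ω‖ ≤ ε⁻¹ := by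
    filter_upwards [hg1bd] with ω hω
    rw [norm_mul]
    have h1 : ‖(D ⁻¹' ({1} : Set ℝ)).indicator (fun _ => (1:ℝ)) ω‖ ≤ 1 := by
      by_cases hωB : ω ∈ D ⁻¹' ({1} : Set ℝ) <;> simp [Set.indicator_apply, hωB]
    calc ‖(D ⁻¹' ({1} : Set ℝ)).indicator (fun _ => (1:ℝ)) ω‖ * ‖g1 ω‖ ≤ 1 * ε⁻¹ :=
          mul_le_mul h1 hω (norm_nonneg _) zero_le_one
      _ = ε⁻¹ := one_mul _
  have hw0bd : ∀ᵐ ω ∂μ, ‖(D ⁻¹' ({0} : Set ℝ)).indicator (fun _ => (1:ℝ)) ω * g0 ω‖ ≤ ε⁻¹ := by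
    filter_upwards [hg0bd] with ω hω
    rw [norm_mul]
    have h1 : ‖(D ⁻¹' ({0} : Set ℝ)).indicator (fun _ => (1:ℝ)) ω‖ ≤ 1 := by
      by_cases hωB : ω ∈ D ⁻¹' ({0} : Set ℝ) <;> simp [Set.indicator_apply, hωB]
    calc ‖(D ⁻¹' ({0} : Set ℝ)).indicator (fun _ => (1:ℝ)) ω‖ * ‖g0 ω‖ ≤ 1 * ε⁻¹ :=
          mul_le_mul h1 hω (norm_nonneg _) zero_le_one
      _ = ε⁻¹ := one_mul _
  have hg1m : Measurable g1 := ((hg1sm.mono hm').measurable)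
  have hg0m : Measurable g0 := ((hg0sm.mono hm').measurable)
  have hI1 : Integrable
      (fun ω => Y1 ω * ((D ⁻¹' ({1} : Set ℝ)).indicator (fun _ => (1:ℝ)) ω * g1 ω)) μ := by
    have hsm : AEStronglyMeasurable
        (fun ω => (D ⁻¹' ({1} : Set ℝ)).indicator (fun _ => (1:ℝ)) ω * g1 ω) μ :=
      ((measurable_const.indicator (hD (measurableSet_singleton 1))).mul hg1m).aestronglyMeasurable
    exact (hY1int.bdd_mul hsm hw1bd).congr (ae_of_all _ fun ω => mul_comm _ _)
  have hI0 : Integrable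
      (fun ω => Y0 ω * ((D ⁻¹' ({0} : Set ℝ)).indicator (fun _ => (1:ℝ)) ω * g0 ω)) μ := by
    have hsm : AEStronglyMeasurable
        (fun ω => (D ⁻¹' ({0} : Set ℝ)).indicator (fun _ => (1:ℝ)) ω * g0 ω) μ :=
      ((measurable_const.indicator (hD (measurableSet_singleton 0))).mul hg0m).aestronglyMeasurable
    exact (hY0int.bdd_mul hsm hw0bd).congr (ae_of_all _ fun ω => mul_comm _ _)
  -- put everything together
  have hRHS : ∫ ω, D ω * Y ω / p1X ω - (1 - D ω) * Y ω / (1 - p1X ω) ∂μ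
      = ∫ ω, Y1 ω ∂μ - ∫ ω, Y0 ω ∂μ := by
    calc ∫ ω, D ω * Y ω / p1X ω - (1 - D ω) * Y ω / (1 - p1X ω) ∂μ
        = ∫ ω, (Y1 ω * ((D ⁻¹' ({1} : Set ℝ)).indicator (fun _ => (1:ℝ)) ω * g1 ω)
            - Y0 ω * ((D ⁻¹' ({0} : Set ℝ)).indicator (fun _ => (1:ℝ)) ω * g0 ω)) ∂μ :=
          integral_congr_ae (ae_of_all _ hpt)
      _ = (∫ ω, Y1 ω * ((D ⁻¹' ({1} : Set ℝ)).indicator (fun _ => (1:ℝ)) ω * g1 ω) ∂μ)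
            - ∫ ω, Y0 ω * ((D ⁻¹' ({0} : Set ℝ)).indicator (fun _ => (1:ℝ)) ω * g0 ω) ∂μ :=
          integral_sub hI1 hI0
      _ = ∫ ω, Y1 ω ∂μ - ∫ ω, Y0 ω ∂μ := by rw [E1, R1, E0, R0]
  rw [hRHS]
  exact integral_sub hY1int hY0int
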